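/- Let T be a theory with finite relational signature. Then T has a computable sampling if and only if CSP(T) is decidable. -/

import Mathlib

/-- A finite-arity relational signature: a type of relation symbols with arities. -/
structure Signature where
  symb : Type
  arity : symb → ℕ

/-- A relational structure over a signature. -/
structure Struct (σ : Signature) where
  dom : Type
  rel : ∀ r : σ.symb, Set (Fin (σ.arity r) → dom)

/-- Atomic formulas over variables `V`: relational atoms, equality, and falsum. -/
inductive Atom (σ : Signature) (V : Type) where
  | rel (r : σ.symb) (v : Fin (σ.arity r) → V)
  | eq (x y : V)
  | bot

/-- Satisfaction of an atomic formula under an assignment. -/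
def Atom.holds {σ : Signature} {V : Type} (A : Struct σ) (s : V → A.dom) :
    Atom σ V → Prop
  | .rel r v => (fun i => s (v i)) ∈ A.rel r
  | .eq x y => s x = s y
  | .bot => False

/-- An assignment satisfies a conjunction (list) of atomic formulas. -/
def satisfies {σ : Signature} {V : Type} (A : Struct σ) (s : V → A.dom)
    (φ : List (Atom σ V)) : Prop :=
  ∀ a ∈ φ, a.holds A s

/-- A conjunction of atomic formulas is satisfiable in a structure. -/
def satisfiable {σ : Signature} {V : Type} (A : Struct σ) (φ : List (Atom σ V)) : Prop :=
  ∃ s : V → A.dom, satisfies A s φ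

/-- The atom is a relational atom (not an equality and not `⊥`). -/
def Atom.isRel {σ : Signature} {V : Type} : Atom σ V → Prop
  | .rel _ _ => True
  | _ => False

/-- The variables occurring in an atom. -/
def Atom.vars {σ : Signature} {V : Type} : Atom σ V → Set V
  | .rel _ v => Set.range v
  | .eq x y => {x, y}
  | .bot => ∅

/-- The canonical database of a conjunction of atomic formulas: the structure on the
variables in which `R` holds on exactly the tuples `t` with `R(t)` a conjunct. -/
def canonicalDB {σ : Signature} {V : Type} (φ : List (Atom σ V)) : Struct σ :=
  ⟨V, fun r => {v | Atom.rel r v ∈ φ}⟩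

/-- Homomorphisms of relational structures. -/
def IsHom {σ : Signature} (A B : Struct σ) (h : A.dom → B.dom) : Prop :=
  ∀ (r : σ.symb) (v : Fin (σ.arity r) → A.dom), v ∈ A.rel r → (fun i => h (v i)) ∈ B.rel r

/-- Code of an atomic formula: `(0, [x, y])` is the equality `x = y`, `(1, _)` is `⊥`,
and `(r + 2, v)` is the relational atom `R_r(v)` (variables are natural numbers). -/
abbrev AtomCode : Type := ℕ × List ℕ

/-- Code of an instance of the CSP: a conjunction (list) of coded atomic formulas. -/
abbrev InstCode : Type := List AtomCode

/-- Code of a finite structure: the domain size `m` (domain `{0, …, m-1}`) together with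
a list of entries `(r, t)` meaning that the tuple `t` is in the relation `R_r`. -/
abbrev StructCode : Type := ℕ × List (ℕ × List ℕ)

/-- Satisfaction of a coded atomic formula in a structure over the finite relational
signature with `K` relation symbols of arities `ar`. -/
def holdsCode {K : ℕ} {ar : Fin K → ℕ} (A : Struct ⟨Fin K, ar⟩) (s : ℕ → A.dom) :
    AtomCode → Prop
  | (0, v) => ∃ x y : ℕ, v = [x, y] ∧ s x = s y
  | (1, _) => False
  | (r + 2, v) => ∃ h : r < K, v.length = ar ⟨r, h⟩ ∧
      (fun i : Fin (ar ⟨r, h⟩) => s (v.getD i.val 0)) ∈ A.rel ⟨r, h⟩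

/-- Satisfaction of a coded atomic formula in a coded finite structure. -/
def holdsInCode (B : StructCode) (s : ℕ → ℕ) : AtomCode → Prop
  | (0, v) => ∃ x y : ℕ, v = [x, y] ∧ s x = s y
  | (1, _) => False
  | (r + 2, v) => (r, v.map s) ∈ B.2

/-- Satisfiability of a coded instance in a coded finite structure. -/
def codeSat (B : StructCode) (φ : InstCode) : Prop :=
  ∃ s : ℕ → ℕ, (∀ x, s x < B.1) ∧ ∀ c ∈ φ, holdsInCode B s c

/-- Satisfiability of a coded instance in some model of the theory, the theory being
represented semantically by its class `M` of models. -/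
def SatM {K : ℕ} {ar : Fin K → ℕ} (M : Set (Struct ⟨Fin K, ar⟩)) (φ : InstCode) : Prop :=
  ∃ A ∈ M, ∃ s : ℕ → A.dom, ∀ c ∈ φ, holdsCode A s c

/-! ### Auxiliary machinery -/

section Aux
set_option maxHeartbeats 1000000

open Primrec

/-- Boolean "all" via foldr. -/
def listAllB {α : Type} (g : α → Bool) (l : List α) : Bool :=
  l.foldr (fun a acc => g a && acc) true

/-- Boolean "any" via foldr. -/
def listAnyB {α : Type} (g : α → Bool) (l : List α) : Bool :=
  l.foldr (fun a acc => g a || acc) false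

theorem listAllB_iff {α : Type} (g : α → Bool) (l : List α) :
    listAllB g l = true ↔ ∀ a ∈ l, g a = true := by
  induction l with
  | nil => simp [listAllB]
  | cons a l ih => simp [listAllB] at ih ⊢; simp [ih]

theorem listAnyB_iff {α : Type} (g : α → Bool) (l : List α) :
    listAnyB g l = true ↔ ∃ a ∈ l, g a = true := by
  induction l with
  | nil => simp [listAnyB]
  | cons a l ih => simp [listAnyB] at ih ⊢; simp [ih]

theorem primrec_listAllB {α β : Type} [Primcodable α] [Primcodable β]
    {f : α → List β} {g : α → β → Bool} (hf : Primrec f) (hg : Primrec₂ g) :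
    Primrec fun a => listAllB (g a) (f a) :=
  Primrec.list_foldr hf (Primrec.const true)
    ((Primrec.and.comp (hg.comp Primrec.fst (Primrec.fst.comp Primrec.snd))
      (Primrec.snd.comp Primrec.snd)).to₂)

theorem primrec_listAnyB {α β : Type} [Primcodable α] [Primcodable β]
    {f : α → List β} {g : α → β → Bool} (hf : Primrec f) (hg : Primrec₂ g) :
    Primrec fun a => listAnyB (g a) (f a) :=
  Primrec.list_foldr hf (Primrec.const false : Primrec fun _ => false)
    ((Primrec.or.comp (hg.comp Primrec.fst (Primrec.fst.comp Primrec.snd))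
      (Primrec.snd.comp Primrec.snd)).to₂)

/-- All tuples of length `k` with entries `< m`. -/
def tuplesL : ℕ → ℕ → List (List ℕ)
  | 0, _ => [[]]
  | k + 1, m => (List.range m).flatMap fun x => (tuplesL k m).map (x :: ·)

theorem mem_tuplesL {k m : ℕ} {w : List ℕ} :
    w ∈ tuplesL k m ↔ w.length = k ∧ ∀ x ∈ w, x < m := by
  induction k generalizing w with
  | zero =>
    simp only [tuplesL, List.mem_singleton]
    constructor
    · rintro rfl; simp
    · rintro ⟨h, _⟩; exact List.length_eq_zero_iff.1 h
  | succ k ih =>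
    cases w with
    | nil =>
      simp [tuplesL, List.mem_flatMap]
    | cons x t =>
      simp only [tuplesL, List.mem_flatMap, List.mem_map, List.mem_range]
      constructor
      · rintro ⟨a, ha, u, hu, h⟩
        injection h with h1 h2
        subst h1; subst h2
        obtain ⟨h1, h2⟩ := ih.1 hu
        refine ⟨by simp [h1], ?_⟩
        intro y hy
        rcases List.mem_cons.1 hy with rfl | hy'
        · exact ha
        · exact h2 y hy' 
      · rintro ⟨hlen, hmem⟩
        refine ⟨x, hmem x (by simp), t, ih.2 ⟨by simpa using hlen, fun y hy => hmem y (by simp [hy])⟩, rfl⟩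

theorem primrec_tuplesL : Primrec₂ tuplesL := by
  have h : Primrec fun p : ℕ × ℕ =>
      Nat.rec (motive := fun _ => List (List ℕ)) [[]]
        (fun _ ih => (List.range p.2).flatMap fun x => ih.map (x :: ·)) p.1 := by
    have hh2 : Primrec fun (z : ((ℕ × ℕ) × (ℕ × List (List ℕ))) × ℕ) =>
        z.1.2.2.map (z.2 :: ·) :=
      Primrec.list_map (Primrec.snd.comp (Primrec.snd.comp Primrec.fst))
        ((Primrec.list_cons.comp (Primrec.snd.comp Primrec.fst) Primrec.snd).to₂)
    have hh1 : Primrec fun (z : (ℕ × ℕ) × (ℕ × List (List ℕ))) =>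
        (List.range z.1.2).flatMap fun x => z.2.2.map (x :: ·) :=
      Primrec.list_flatMap (Primrec.list_range.comp (Primrec.snd.comp Primrec.fst)) hh2.to₂
    have hh : Primrec₂ fun (p : ℕ × ℕ) (q : ℕ × List (List ℕ)) =>
        (List.range p.2).flatMap fun x => q.2.map (x :: ·) := hh1.to₂
    exact Primrec.nat_rec' Primrec.fst (Primrec.const ([[]] : List (List ℕ))) hh
  refine h.to₂.of_eq fun k m => ?_
  induction k with
  | zero => rfl
  | succ k ih => simp only [tuplesL, ih]

/-- Bool check of one coded atom against an assignment given as a list. -/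
def atomCheck (B : StructCode) (s : List ℕ) (c : AtomCode) : Bool :=
  Nat.casesOn c.1
    (decide (c.2.length = 2) &&
      decide (s.getD (c.2.getD 0 0) 0 = s.getD (c.2.getD 1 0) 0))
    (fun r1 => Nat.casesOn r1 false
      (fun r => listAnyB (fun e => decide (e = (r, c.2.map fun x => s.getD x 0))) B.2))

theorem atomCheck_iff (B : StructCode) (lst : List ℕ) (c : AtomCode) :
    atomCheck B lst c = true ↔ holdsInCode B (fun x => lst.getD x 0) c := by
  obtain ⟨r, v⟩ := c
  match r with
  | 0 =>
    show (decide (v.length = 2) &&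
        decide (lst.getD (v.getD 0 0) 0 = lst.getD (v.getD 1 0) 0)) = true ↔
      ∃ x y : ℕ, v = [x, y] ∧ lst.getD x 0 = lst.getD y 0
    rw [Bool.and_eq_true, decide_eq_true_eq, decide_eq_true_eq]
    constructor
    · rintro ⟨h1, h2⟩
      match v, h1 with
      | [a, b], _ => exact ⟨a, b, rfl, by simpa using h2⟩
    · rintro ⟨x, y, rfl, h⟩
      exact ⟨rfl, by simpa using h⟩
  | 1 =>
    show false = true ↔ False
    simp
  | r + 2 =>
    show listAnyB (fun e => decide (e = (r, v.map fun x => lst.getD x 0))) B.2 = true ↔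
      (r, v.map fun x => lst.getD x 0) ∈ B.2
    rw [listAnyB_iff]
    simp

theorem holdsInCode_congr {B : StructCode} {s t : ℕ → ℕ} {c : AtomCode}
    (h : ∀ x ∈ c.2, s x = t x) (hc : holdsInCode B s c) : holdsInCode B t c := by
  obtain ⟨r, v⟩ := c
  match r with
  | 0 =>
    obtain ⟨x, y, rfl, hxy⟩ := hc
    exact ⟨x, y, rfl, by rw [← h x (by simp), ← h y (by simp)]; exact hxy⟩
  | 1 => exact hc
  | r + 2 =>
    show (r, v.map t) ∈ B.2
    have : v.map s = v.map t := List.map_congr_left h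
    rw [← this]; exact hc

/-- Bool check of `codeSat` for instances with variables `< n`. -/
def codeSatCheck (n : ℕ) (B : StructCode) (φ : InstCode) : Bool :=
  decide (0 < B.1) && listAnyB (fun lst => listAllB (atomCheck B lst) φ) (tuplesL n B.1)

theorem codeSatCheck_iff {n : ℕ} {B : StructCode} {φ : InstCode}
    (hv : ∀ c ∈ φ, ∀ x ∈ c.2, x < n) :
    codeSatCheck n B φ = true ↔ codeSat B φ := by
  rw [codeSatCheck, Bool.and_eq_true, decide_eq_true_eq, listAnyB_iff]
  constructor
  · rintro ⟨hB, lst, hlst, hall⟩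
    rw [mem_tuplesL] at hlst
    refine ⟨fun x => lst.getD x 0, fun x => ?_, fun c hc => ?_⟩
    · show lst.getD x 0 < B.1
      by_cases hx : x < lst.length
      · rw [List.getD_eq_getElem _ _ hx]
        exact hlst.2 _ (List.getElem_mem _)
      · rw [List.getD_eq_default _ _ (le_of_not_gt hx)]
        exact hB
    · exact (atomCheck_iff _ _ _).1 ((listAllB_iff _ _).1 hall c hc)
  · rintro ⟨s, hsb, hs⟩
    refine ⟨lt_of_le_of_lt (Nat.zero_le _) (hsb 0), (List.range n).map s, ?_, ?_⟩
    · rw [mem_tuplesL]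
      refine ⟨by simp, ?_⟩
      intro x hx
      obtain ⟨i, _, rfl⟩ := List.mem_map.1 hx
      exact hsb i
    · rw [listAllB_iff]
      intro c hc
      rw [atomCheck_iff]
      refine holdsInCode_congr (fun x hx => ?_) (hs c hc)
      have hxn : x < n := hv c hc x hx
      show s x = ((List.range n).map s).getD x 0
      rw [List.getD_eq_getElem _ _ (by simpa using hxn)]
      simp

/-- A strict bound on the variables occurring in a list of naturals. -/
def natsBound (l : List ℕ) : ℕ := l.foldr (fun x k => max (x + 1) k) 0

/-- A strict bound on the variables occurring in an instance. -/
def varBound (φ : InstCode) : ℕ := φ.foldr (fun c m => max (natsBound c.2) m) 0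

theorem lt_natsBound {l : List ℕ} {x : ℕ} (h : x ∈ l) : x < natsBound l := by
  induction l with
  | nil => simp at h
  | cons a l ih =>
    rcases List.mem_cons.1 h with rfl | h
    · exact lt_of_lt_of_le (Nat.lt_succ_self x) (le_max_left _ _)
    · exact lt_of_lt_of_le (ih h) (le_max_right _ _)

theorem lt_varBound {φ : InstCode} {c : AtomCode} {x : ℕ} (hc : c ∈ φ) (hx : x ∈ c.2) :
    x < varBound φ := by
  refine lt_of_lt_of_le (lt_natsBound hx) ?_
  induction φ with
  | nil => simp at hc
  | cons a l ih =>
    rcases List.mem_cons.1 hc with rfl | hc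
    · exact le_max_left _ _
    · exact le_trans (ih hc) (le_max_right _ _)

theorem primrec_natsBound : Primrec natsBound :=
  Primrec.list_foldr Primrec.id (Primrec.const (0:ℕ))
    ((Primrec.nat_max.comp (Primrec.succ.comp (Primrec.fst.comp Primrec.snd))
      (Primrec.snd.comp Primrec.snd)).to₂)

theorem primrec_varBound : Primrec varBound :=
  Primrec.list_foldr Primrec.id (Primrec.const (0:ℕ))
    ((Primrec.nat_max.comp
      (primrec_natsBound.comp (Primrec.snd.comp (Primrec.fst.comp Primrec.snd)))
      (Primrec.snd.comp Primrec.snd)).to₂)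

theorem primrec_atomCheck :
    Primrec fun p : (StructCode × List ℕ) × AtomCode => atomCheck p.1.1 p.1.2 p.2 := by
  have hg : Primrec fun p : (StructCode × List ℕ) × AtomCode =>
      decide (p.2.2.length = 2) &&
        decide (p.1.2.getD (p.2.2.getD 0 0) 0 = p.1.2.getD (p.2.2.getD 1 0) 0) := by
    refine Primrec.and.comp ?_ ?_
    · exact PrimrecPred.decide (Primrec.eq.comp (Primrec.list_length.comp (Primrec.snd.comp Primrec.snd))
        (Primrec.const (2:ℕ)))
    · refine PrimrecPred.decide (Primrec.eq.comp ?_ ?_)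
      · exact (Primrec.list_getD (0:ℕ)).comp (Primrec.snd.comp Primrec.fst)
          ((Primrec.list_getD (0:ℕ)).comp (Primrec.snd.comp Primrec.snd) (Primrec.const (0:ℕ)))
      · exact (Primrec.list_getD (0:ℕ)).comp (Primrec.snd.comp Primrec.fst)
          ((Primrec.list_getD (0:ℕ)).comp (Primrec.snd.comp Primrec.snd) (Primrec.const (1:ℕ)))
  have hgetd : Primrec fun u : ((((StructCode × List ℕ) × AtomCode) × ℕ) × (ℕ × List ℕ)) × ℕ =>
      u.1.1.1.1.2.getD u.2 0 :=
    (Primrec.list_getD (0:ℕ)).comp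
      (Primrec.snd.comp (Primrec.fst.comp (Primrec.fst.comp (Primrec.fst.comp Primrec.fst))))
      Primrec.snd
  have hmap : Primrec fun w : (((StructCode × List ℕ) × AtomCode) × ℕ) × (ℕ × List ℕ) =>
      w.1.1.2.2.map fun x => w.1.1.1.2.getD x 0 :=
    Primrec.list_map
      (Primrec.snd.comp (Primrec.snd.comp (Primrec.fst.comp Primrec.fst))) hgetd.to₂
  have hgz : Primrec fun w : (((StructCode × List ℕ) × AtomCode) × ℕ) × (ℕ × List ℕ) =>
      decide (w.2 = (w.1.2, w.1.1.2.2.map fun x => w.1.1.1.2.getD x 0)) :=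
    PrimrecPred.decide (Primrec.eq.comp Primrec.snd (Primrec.pair (Primrec.snd.comp Primrec.fst) hmap))
  have hrelP : Primrec fun z : ((StructCode × List ℕ) × AtomCode) × ℕ =>
      listAnyB (fun e => decide (e = (z.2, z.1.2.2.map fun x => z.1.1.2.getD x 0))) z.1.1.1.2 :=
    primrec_listAnyB (Primrec.snd.comp (Primrec.fst.comp (Primrec.fst.comp Primrec.fst))) hgz.to₂
  have hinnerP : Primrec fun z : ((StructCode × List ℕ) × AtomCode) × ℕ =>
      Nat.casesOn (motive := fun _ => Bool) z.2 false
        (fun r => listAnyB (fun e => decide (e = (r, z.1.2.2.map fun x => z.1.1.2.getD x 0)))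
          z.1.1.1.2) :=
    Primrec.nat_casesOn Primrec.snd (Primrec.const false)
      ((hrelP.comp (Primrec.pair (Primrec.fst.comp Primrec.fst) Primrec.snd)).to₂)
  exact Primrec.nat_casesOn (Primrec.fst.comp Primrec.snd) hg hinnerP.to₂

theorem primrec_codeSatCheck :
    Primrec fun p : (ℕ × InstCode) × StructCode => codeSatCheck p.1.1 p.2 p.1.2 := by
  have haP : Primrec fun w : (((ℕ × InstCode) × StructCode) × List ℕ) × AtomCode =>
      atomCheck w.1.1.2 w.1.2 w.2 :=
    primrec_atomCheck.comp
      (Primrec.pair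
        (Primrec.pair (Primrec.snd.comp (Primrec.fst.comp Primrec.fst))
          (Primrec.snd.comp Primrec.fst))
        Primrec.snd)
  have hb : Primrec fun q : ((ℕ × InstCode) × StructCode) × List ℕ =>
      listAllB (atomCheck q.1.2 q.2) q.1.1.2 :=
    primrec_listAllB (Primrec.snd.comp (Primrec.fst.comp Primrec.fst)) haP.to₂
  refine Primrec.and.comp ?_ ?_
  · exact PrimrecPred.decide (Primrec.nat_lt.comp (Primrec.const (0:ℕ)) (Primrec.fst.comp Primrec.snd))
  · exact primrec_listAnyB
      (primrec_tuplesL.comp (Primrec.fst.comp Primrec.fst) (Primrec.fst.comp Primrec.snd)) hb.to₂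

/-- All "sublists" (enough of them) of a list. -/
def sublistsL {α : Type} (l : List α) : List (List α) :=
  l.foldr (fun a acc => acc ++ acc.map (a :: ·)) [[]]

theorem filter_mem_sublistsL {α : Type} (p : α → Bool) (l : List α) :
    l.filter p ∈ sublistsL l := by
  induction l with
  | nil => simp [sublistsL, List.filter]
  | cons a l ih =>
    rw [List.filter_cons]
    show _ ∈ sublistsL l ++ (sublistsL l).map (a :: ·)
    by_cases h : p a
    · rw [if_pos h]
      exact List.mem_append_right _ (List.mem_map.2 ⟨_, ih, rfl⟩)
    · rw [if_neg h]
      exact List.mem_append_left _ ih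

/-- The list of all possible relational entries over signature `arl` with entries `< n+1`. -/
def masterList (arl : List ℕ) (n : ℕ) : List (ℕ × List ℕ) :=
  (List.range arl.length).flatMap fun r => (tuplesL (arl.getD r 0) (n + 1)).map fun w => (r, w)

theorem mem_masterList {arl : List ℕ} {n r : ℕ} {w : List ℕ} (h1 : r < arl.length)
    (h2 : w.length = arl.getD r 0) (h3 : ∀ x ∈ w, x < n + 1) : (r, w) ∈ masterList arl n :=
  List.mem_flatMap.2 ⟨r, List.mem_range.2 h1,
    List.mem_map.2 ⟨w, mem_tuplesL.2 ⟨h2, h3⟩, rfl⟩⟩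

/-- Turn a canonical database code into the coded instance consisting of its atoms. -/
def instOf (l : List (ℕ × List ℕ)) : InstCode := l.map fun e => (e.1 + 2, e.2)

theorem primrec_sublistsL : Primrec (sublistsL : List (ℕ × List ℕ) → List (List (ℕ × List ℕ))) := by
  have hstep : Primrec fun z : List (ℕ × List ℕ) × ((ℕ × List ℕ) × List (List (ℕ × List ℕ))) =>
      z.2.2 ++ z.2.2.map (z.2.1 :: ·) := by
    have hmap : Primrec fun w : (List (ℕ × List ℕ) ×
        ((ℕ × List ℕ) × List (List (ℕ × List ℕ)))) × List (ℕ × List ℕ) =>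
        w.1.2.1 :: w.2 :=
      Primrec.list_cons.comp (Primrec.fst.comp (Primrec.snd.comp Primrec.fst)) Primrec.snd
    exact Primrec.list_append.comp (Primrec.snd.comp Primrec.snd)
      (Primrec.list_map (Primrec.snd.comp Primrec.snd) hmap.to₂)
  exact Primrec.list_foldr Primrec.id (Primrec.const ([[]] : List (List (ℕ × List ℕ)))) hstep.to₂

theorem primrec_masterList (arl : List ℕ) : Primrec (masterList arl) := by
  have hmap : Primrec fun w : (ℕ × ℕ) × List ℕ => (w.1.2, w.2) :=
    Primrec.pair (Primrec.snd.comp Primrec.fst) Primrec.snd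
  have hinner : Primrec fun z : ℕ × ℕ =>
      (tuplesL (arl.getD z.2 0) (z.1 + 1)).map fun w => (z.2, w) :=
    Primrec.list_map
      (primrec_tuplesL.comp
        ((Primrec.list_getD (0:ℕ)).comp (Primrec.const arl) Primrec.snd)
        (Primrec.succ.comp Primrec.fst))
      hmap.to₂
  exact Primrec.list_flatMap (Primrec.list_range.comp (Primrec.const arl.length)) hinner.to₂

theorem primrec_instOf : Primrec instOf := by
  have hmap : Primrec fun w : List (ℕ × List ℕ) × (ℕ × List ℕ) =>
      (w.2.1 + 2, w.2.2) :=
    Primrec.pair (Primrec.succ.comp (Primrec.succ.comp (Primrec.fst.comp Primrec.snd)))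
      (Primrec.snd.comp Primrec.snd)
  exact Primrec.list_map Primrec.id hmap.to₂

/-- Mapping a computable function over a list, computably. -/
theorem computable_list_map {α β σ : Type} [Primcodable α] [Primcodable β] [Primcodable σ]
    {f : α → List β} {g : α → β → σ} (hf : Computable f) (hg : Computable₂ g) :
    Computable fun a => (f a).map (g a) := by
  have H : Computable fun a =>
      Nat.rec (motive := fun _ => List σ) []
        (fun k ih => ih ++ (Option.casesOn (motive := fun _ => List σ) ((f a)[k]?) []
          fun b => [g a b])) (f a).length := by
    have hopt : Computable fun z : α × (ℕ × List σ) =>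
        Option.casesOn (motive := fun _ => List σ) ((f z.1)[z.2.1]?) []
          fun b => [g z.1 b] := by
      refine Computable.option_casesOn
        (Computable.list_getElem?.comp (hf.comp Computable.fst) (Computable.fst.comp Computable.snd))
        (Computable.const ([] : List σ)) ?_
      have : Computable fun w : (α × (ℕ × List σ)) × β => [g w.1.1 w.2] :=
        Computable.list_cons.comp (hg.comp (Computable.fst.comp Computable.fst) Computable.snd)
          (Computable.const ([] : List σ))
      exact this.to₂
    have hstep : Computable fun z : α × (ℕ × List σ) =>
        z.2.2 ++ (Option.casesOn (motive := fun _ => List σ) ((f z.1)[z.2.1]?) []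
          fun b => [g z.1 b]) :=
      Computable.list_append.comp (Computable.snd.comp Computable.snd) hopt
    exact Computable.nat_rec (Computable.list_length.comp hf) (Computable.const ([] : List σ))
      hstep.to₂
  refine H.of_eq fun a => ?_
  have key : ∀ k : ℕ,
      Nat.rec (motive := fun _ => List σ) []
        (fun k ih => ih ++ (Option.casesOn (motive := fun _ => List σ) ((f a)[k]?) []
          fun b => [g a b])) k = ((f a).take k).map (g a) := by
    intro k
    induction k with
    | zero => simp
    | succ k ih =>
      show _ ++ _ = _
      rw [ih, List.take_succ, List.map_append]
      congr 1
      cases h : (f a)[k]? <;> simp [h]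
  rw [key, List.take_length]

/-- Soundness: if the instance attached to a canonical-database code is satisfiable in a model
and the coded instance maps homomorphically into that database, the instance is satisfiable. -/
theorem codeSat_sound {K : ℕ} {ar : Fin K → ℕ} {M : Set (Struct ⟨Fin K, ar⟩)} {m : ℕ}
    {l : List (ℕ × List ℕ)} {φ : InstCode}
    (hl : SatM M (instOf l)) (hc : codeSat (m, l) φ) : SatM M φ := by
  obtain ⟨A, hA, t, ht⟩ := hl
  obtain ⟨s, hsb, hs⟩ := hc
  refine ⟨A, hA, fun x => t (s x), ?_⟩
  intro c hcφ
  obtain ⟨r, v⟩ := c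
  rcases r with _ | _ | r
  · obtain ⟨x, y, rfl, hxy⟩ := hs _ hcφ
    exact ⟨x, y, rfl, congrArg t hxy⟩
  · cases hs _ hcφ
  · have hmem : (r, v.map s) ∈ l := hs _ hcφ
    have h2 : (r + 2, v.map s) ∈ instOf l := List.mem_map.2 ⟨(r, v.map s), hmem, rfl⟩
    obtain ⟨h, hlen, hrel⟩ := ht _ h2
    have hvlen : v.length = ar ⟨r, h⟩ := by simpa using hlen
    refine ⟨h, hvlen, ?_⟩
    have hfix : (fun i : Fin (ar ⟨r, h⟩) => t (s (v.getD i.val 0))) =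
        fun i : Fin (ar ⟨r, h⟩) => t ((v.map s).getD i.val 0) := by
      funext i
      have hi : i.val < v.length := by rw [hvlen]; exact i.isLt
      rw [List.getD_eq_getElem _ _ hi, List.getD_eq_getElem _ _ (by simpa using hi),
        List.getElem_map]
    show (fun i : Fin (ar ⟨r, h⟩) => t (s (v.getD i.val 0))) ∈ A.rel ⟨r, h⟩
    rw [hfix]
    exact hrel

/-- Completeness: a satisfiable instance with variables `< n` maps into the canonical database
of a satisfiable instance chosen from the master list. -/
theorem exists_good_code {K : ℕ} {ar : Fin K → ℕ} {M : Set (Struct ⟨Fin K, ar⟩)}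
    {n : ℕ} {φ : InstCode} (hvars : ∀ c ∈ φ, ∀ x ∈ c.2, x < n)
    (hsat : SatM M φ) :
    ∃ l ∈ sublistsL (masterList (List.ofFn ar) n), SatM M (instOf l) ∧ codeSat (n + 1, l) φ := by
  classical
  obtain ⟨A, hA, t, ht⟩ := hsat
  set ρ : ℕ → ℕ := fun x => if x < n then sInf {y | t y = t x} else 0 with hρdef
  have hρt : ∀ x, x < n → t (ρ x) = t x := by
    intro x hx
    rw [hρdef]
    simp only [if_pos hx]
    exact Nat.sInf_mem (⟨x, rfl⟩ : Set.Nonempty {y | t y = t x})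
  have hρlt : ∀ x, x < n → ρ x < n := by
    intro x hx
    rw [hρdef]
    simp only [if_pos hx]
    exact lt_of_le_of_lt (Nat.sInf_le rfl) hx
  have hρbound : ∀ x, ρ x < n + 1 := by
    intro x
    by_cases hx : x < n
    · exact lt_trans (hρlt x hx) (Nat.lt_succ_self n)
    · rw [hρdef]; simp only [if_neg hx]; exact Nat.succ_pos n
  have hρeq : ∀ x y, x < n → y < n → t x = t y → ρ x = ρ y := by
    intro x y hx hy hxy
    rw [hρdef]
    simp only [if_pos hx, if_pos hy, hxy]
  set mapped : List (ℕ × List ℕ) :=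
    φ.filterMap (fun c => if 2 ≤ c.1 then some (c.1 - 2, c.2.map ρ) else none) with hmapdef
  set l : List (ℕ × List ℕ) :=
    (masterList (List.ofFn ar) n).filter (fun e => decide (e ∈ mapped)) with hldef
  have hlsub : ∀ e ∈ l, e ∈ mapped := by
    intro e he
    rw [hldef] at he
    exact of_decide_eq_true (List.mem_filter.1 he).2
  refine ⟨l, by rw [hldef]; exact filter_mem_sublistsL _ _, ?_, ?_⟩
  · -- the collapsed instance is satisfiable in A
    refine ⟨A, hA, t, ?_⟩
    intro c hc
    obtain ⟨e, hel, rfl⟩ := List.mem_map.1 hc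
    obtain ⟨c0, hc0, hsome⟩ := List.mem_filterMap.1 (hlsub e hel)
    obtain ⟨r0, v0⟩ := c0
    by_cases h2 : 2 ≤ r0
    · rw [if_pos h2] at hsome
      obtain ⟨r, rfl⟩ : ∃ r, r0 = r + 2 := ⟨r0 - 2, by omega⟩
      have he' : e = (r, v0.map ρ) := by
        have h3 := Option.some.inj hsome
        rw [← h3]
        show ((r + 2, v0).1 - 2, (r + 2, v0).2.map ρ) = (r, v0.map ρ)
        simp
      subst he'
      obtain ⟨h, hlen, hrel⟩ := ht (r + 2, v0) hc0
      show holdsCode A t (r + 2, v0.map ρ)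
      refine ⟨h, by simpa using hlen, ?_⟩
      have hfix : (fun i : Fin (ar ⟨r, h⟩) => t ((v0.map ρ).getD i.val 0)) =
          fun i : Fin (ar ⟨r, h⟩) => t (v0.getD i.val 0) := by
        funext i
        have hi : i.val < v0.length := by rw [hlen]; exact i.isLt
        rw [List.getD_eq_getElem _ _ (by simpa using hi), List.getElem_map,
          List.getD_eq_getElem _ _ hi]
        exact hρt _ (hvars _ hc0 _ (List.getElem_mem _))
      rw [hfix]
      exact hrel
    · rw [if_neg h2] at hsome
      cases hsome
  · -- φ maps into the canonical database of `l`
    refine ⟨ρ, hρbound, ?_⟩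
    intro c hcφ
    obtain ⟨r, v⟩ := c
    rcases r with _ | _ | r
    · obtain ⟨x, y, rfl, hxy⟩ := ht _ hcφ
      exact ⟨x, y, rfl,
        hρeq x y (hvars _ hcφ x (by simp)) (hvars _ hcφ y (by simp)) hxy⟩
    · cases ht _ hcφ
    · obtain ⟨h, hlen, _⟩ := ht _ hcφ
      show (r, v.map ρ) ∈ l
      rw [hldef]
      refine List.mem_filter.2 ⟨?_, decide_eq_true ?_⟩
      · apply mem_masterList
        · simpa using h
        · rw [List.length_map, hlen, List.getD_eq_getElem _ _ (by simpa using h)]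
          simp
        · intro x hx
          obtain ⟨x0, _, rfl⟩ := List.mem_map.1 hx
          exact hρbound x0
      · refine List.mem_filterMap.2 ⟨(r + 2, v), hcφ, ?_⟩
        rw [if_pos (by omega : 2 ≤ ((r + 2 : ℕ), v).1)]
        simp

end Aux

set_option maxHeartbeats 1000000 in
/-- a theory with finite relational signature has a computable sampling iff
its CSP is decidable. -/
theorem stmt_3 {K : ℕ} {ar : Fin K → ℕ} (M : Set (Struct ⟨Fin K, ar⟩)) :
    (∃ L : ℕ → List StructCode, Computable L ∧
        ∀ (n : ℕ) (φ : InstCode), (∀ c ∈ φ, ∀ x ∈ c.2, x < n) →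
          (SatM M φ ↔ ∃ B ∈ L n, codeSat B φ)) ↔
      ComputablePred (fun φ : InstCode => SatM M φ) := by
  constructor
  · rintro ⟨L, hLcomp, hL⟩
    rw [ComputablePred.computable_iff]
    refine ⟨fun φ => listAnyB (fun B => codeSatCheck (varBound φ) B φ) (L (varBound φ)), ?_, ?_⟩
    · have hinner : Primrec fun q : (InstCode × List StructCode) × StructCode =>
          codeSatCheck (varBound q.1.1) q.2 q.1.1 :=
        primrec_codeSatCheck.comp
          (Primrec.pair
            (Primrec.pair (primrec_varBound.comp (Primrec.fst.comp Primrec.fst))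
              (Primrec.fst.comp Primrec.fst)) Primrec.snd)
      have hg : Primrec fun p : InstCode × List StructCode =>
          listAnyB (fun B => codeSatCheck (varBound p.1) B p.1) p.2 :=
        primrec_listAnyB Primrec.snd hinner.to₂
      exact hg.to_comp.comp (Computable.id.pair (hLcomp.comp primrec_varBound.to_comp))
    · funext φ
      rw [eq_iff_iff]
      rw [hL (varBound φ) φ (fun c hc x hx => lt_varBound hc hx)]
      constructor
      · rintro ⟨B, hB, hsat⟩
        exact (listAnyB_iff _ _).2 ⟨B, hB,
          (codeSatCheck_iff (fun c hc x hx => lt_varBound hc hx)).2 hsat⟩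
      · intro h
        obtain ⟨B, hB, hc⟩ := (listAnyB_iff _ _).1 h
        exact ⟨B, hB, (codeSatCheck_iff (fun c hc x hx => lt_varBound hc hx)).1 hc⟩
  · intro hdec
    obtain ⟨f, hfcomp, hp⟩ := ComputablePred.computable_iff.1 hdec
    have hSat : ∀ ψ : InstCode, SatM M ψ ↔ f ψ = true := fun ψ => iff_of_eq (congrFun hp ψ)
    refine ⟨fun n => (sublistsL (masterList (List.ofFn ar) n)).filterMap
      (fun l => cond (f (instOf l)) (some (n + 1, l)) none), ?_, ?_⟩
    · have h1 : Computable fun n : ℕ =>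
          (sublistsL (masterList (List.ofFn ar) n)).map fun l => (l, f (instOf l)) := by
        refine computable_list_map
          ((primrec_sublistsL.comp (primrec_masterList (List.ofFn ar))).to_comp) ?_
        have hcg : Computable fun z : ℕ × List (ℕ × List ℕ) => (z.2, f (instOf z.2)) :=
          Computable.pair Computable.snd
            (hfcomp.comp (primrec_instOf.to_comp.comp Computable.snd))
        exact hcg.to₂
      have hG : Primrec fun p : ℕ × List (List (ℕ × List ℕ) × Bool) =>
          p.2.filterMap fun q => cond q.2 (some (p.1 + 1, q.1)) none := by
        have hq : Primrec fun w :
            (ℕ × List (List (ℕ × List ℕ) × Bool)) × (List (ℕ × List ℕ) × Bool) =>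
            cond w.2.2 (some (w.1.1 + 1, w.2.1)) (none : Option StructCode) :=
          Primrec.cond (Primrec.snd.comp Primrec.snd)
            (Primrec.option_some.comp
              (Primrec.pair (Primrec.succ.comp (Primrec.fst.comp Primrec.fst))
                (Primrec.fst.comp Primrec.snd)))
            (Primrec.const none)
        exact Primrec.listFilterMap Primrec.snd hq.to₂
      refine (hG.to_comp.comp (Computable.id.pair h1)).of_eq fun n => ?_
      rw [List.filterMap_map]
      rfl
    · intro n φ hvars
      constructor
      · intro hsat
        obtain ⟨l, hlmem, hSatl, hcode⟩ := exists_good_code hvars hsat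
        refine ⟨(n + 1, l), ?_, hcode⟩
        apply List.mem_filterMap.2
        refine ⟨l, hlmem, ?_⟩
        rw [(hSat _).1 hSatl]
        rfl
      · rintro ⟨B, hB, hcode⟩
        obtain ⟨l, hlmem, heq⟩ := List.mem_filterMap.1 hB
        cases hfl : f (instOf l) with
        | false => rw [hfl] at heq; cases heq
        | true =>
          rw [hfl] at heq
          obtain rfl : (n + 1, l) = B := Option.some.inj heq
          exact codeSat_sound ((hSat _).2 hfl) hcode
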